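/- There is a group isomorphism Hom(Hom(⊕_ω ℤ, ℤ), ℤ) ≅ ⊕_ω ℤ. -/

import Mathlib

open Finset

/-- Helper: an integer divisible by arbitrarily high powers of a base `≥ 2` is zero. -/
lemma eq_zero_of_forall_pow_dvd {b m : ℤ} (hb : 2 ≤ b) (h : ∀ N : ℕ, b ^ N ∣ m) : m = 0 := by
  by_contra hm
  set N := m.natAbs with hN
  have h1 : b ^ N ∣ |m| := (dvd_abs _ _).mpr (h N)
  have h2 : b ^ N ≤ |m| := Int.le_of_dvd (abs_pos.mpr hm) h1
  have h3 : (N : ℤ) < 2 ^ N := by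
    exact_mod_cast (Nat.lt_two_pow_self : N < 2 ^ N)
  have h4 : (2:ℤ) ^ N ≤ b ^ N := pow_le_pow_left₀ (by norm_num) hb N
  have h5 : |m| = (N : ℤ) := (Int.abs_eq_natAbs m)
  omega

/-- Key decomposition: the value of `φ` on `x` agrees with the "partial sum" up to a
multiple of `d`, provided `d` divides all tail entries of `x`. -/
lemma tail_dvd (φ : (ℕ → ℤ) →+ ℤ) (x : ℕ → ℤ) (d : ℤ) (N : ℕ)
    (hx : ∀ n, N ≤ n → d ∣ x n) :
    d ∣ (φ x - ∑ k ∈ Finset.range N, x k * φ (Pi.single k 1)) := by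
  classical
  set w : ℕ → ℤ := fun n => if h : N ≤ n then (hx n h).choose else 0 with hw
  have hxw : x = (fun m => ∑ k ∈ Finset.range N, x k * (Pi.single k 1 : ℕ → ℤ) m) + d • w := by
    funext m
    by_cases hm : N ≤ m
    · have : ∑ k ∈ Finset.range N, x k * (Pi.single k 1 : ℕ → ℤ) m = 0 := by
        apply Finset.sum_eq_zero
        intro k hk
        have : m ≠ k := by have := Finset.mem_range.mp hk; omega
        simp [Pi.single_apply, this.symm]
      have hc := (hx m hm).choose_spec
      simp [this, hw, hm, ← hc, Pi.smul_apply]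
    · have hsum : ∑ k ∈ Finset.range N, x k * (Pi.single k 1 : ℕ → ℤ) m = x m := by
        rw [Finset.sum_congr rfl (fun k _ => by rw [Pi.single_apply])]
        simp [Finset.sum_ite_eq' , Finset.mem_range]
        intro h; omega
      simp [hsum, hw, hm]
  have hx2 : φ x = (∑ k ∈ Finset.range N, x k * φ (Pi.single k 1)) + d * φ w := by
    have h1 : (fun m => ∑ k ∈ Finset.range N, x k * (Pi.single k 1 : ℕ → ℤ) m)
        = ∑ k ∈ Finset.range N, x k • (Pi.single k 1 : ℕ → ℤ) := by
      funext m
      rw [Finset.sum_apply]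
      simp [smul_eq_mul]
    conv_lhs => rw [hxw]
    rw [map_add, h1, map_sum, map_zsmul, smul_eq_mul]
    congr 1
    exact Finset.sum_congr rfl fun k _ => by rw [map_zsmul, smul_eq_mul]
  rw [hx2]
  simp

/-- If `φ` kills all the standard basis vectors, then `φ = 0`. -/
lemma vanish_of_single (φ : (ℕ → ℤ) →+ ℤ) (h : ∀ n, φ (Pi.single n 1) = 0) : φ = 0 := by
  classical
  have key : ∀ (b : ℤ), 2 ≤ b → ∀ (x : ℕ → ℤ), (∀ n, b ^ n ∣ x n) → φ x = 0 := by
    intro b hb x hx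
    apply eq_zero_of_forall_pow_dvd hb
    intro N
    have := tail_dvd φ x (b ^ N) N (fun n hn => dvd_trans (pow_dvd_pow b hn) (hx n))
    simpa [h] using this
  ext x
  -- decompose x n = 2^n * a n + 3^n * c n
  have cop : ∀ n : ℕ, IsCoprime ((2:ℤ) ^ n) ((3:ℤ) ^ n) := by
    intro n
    apply IsCoprime.pow
    rw [Int.isCoprime_iff_gcd_eq_one]
    decide
  have dec : ∀ n : ℕ, ∃ u v : ℤ, ((2:ℤ)^n ∣ u) ∧ ((3:ℤ)^n ∣ v) ∧ x n = u + v := by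
    intro n
    obtain ⟨a, c, hac⟩ := cop n
    exact ⟨a * 2 ^ n * x n, c * 3 ^ n * x n, ⟨a * x n, by ring⟩, ⟨c * x n, by ring⟩, by
      have : (a * 2 ^ n + c * 3 ^ n) * x n = x n := by rw [hac]; ring
      linarith [this.symm, (by ring : (a * 2 ^ n + c * 3 ^ n) * x n = a * 2 ^ n * x n + c * 3 ^ n * x n)]⟩
  choose u v hu hv huv using dec
  have hx : x = u + v := funext fun n => huv n
  have h2 : φ u = 0 := key 2 le_rfl u (fun n => hu n)
  have h3 : φ v = 0 := key 3 (by norm_num) v (fun n => hv n)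
  rw [hx, map_add, h2, h3]
  simp

set_option maxHeartbeats 1000000 in
/-- No homomorphism `ℤ^ℕ → ℤ` is nonzero on all standard basis vectors. -/
lemma not_forall_single_ne (φ : (ℕ → ℤ) →+ ℤ) : ¬ ∀ n, φ (Pi.single n 1) ≠ 0 := by
  intro h
  set c : ℕ → ℤ := fun n => φ (Pi.single n 1) with hc
  -- recursively define (M n, s n)
  let P : ℕ → ℤ × ℤ := fun n => Nat.rec (1, 0)
    (fun n p => (p.1 * (2 * (|p.2| + p.1 * |c n| + 1)), p.2 + p.1 * c n)) n
  set M : ℕ → ℤ := fun n => (P n).1 with hM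
  set s : ℕ → ℤ := fun n => (P n).2 with hs
  have hM0 : M 0 = 1 := rfl
  have hs0 : s 0 = 0 := rfl
  have hMsucc : ∀ n, M (n+1) = M n * (2 * (|s n| + M n * |c n| + 1)) := fun n => rfl
  have hssucc : ∀ n, s (n+1) = s n + M n * c n := fun n => rfl
  have hM1 : ∀ n, 1 ≤ M n := by
    intro n
    induction n with
    | zero => simp [hM0]
    | succ n ih =>
      rw [hMsucc]
      have h1 : (1:ℤ) ≤ 2 * (|s n| + M n * |c n| + 1) := by
        have := abs_nonneg (s n)
        have := abs_nonneg (c n)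
        nlinarith
      nlinarith
  have hsb : ∀ n, 2 * |s (n+1)| < M (n+1) := by
    intro n
    have hMpos : (0:ℤ) < M n := by linarith [hM1 n]
    have h1 : |s (n+1)| ≤ |s n| + M n * |c n| := by
      rw [hssucc]
      calc |s n + M n * c n| ≤ |s n| + |M n * c n| := abs_add_le _ _
        _ = |s n| + M n * |c n| := by rw [abs_mul, abs_of_pos hMpos]
    rw [hMsucc]
    have h2 := hM1 n
    have hA : (0:ℤ) ≤ |s n| + M n * |c n| :=
      add_nonneg (abs_nonneg _) (mul_nonneg hMpos.le (abs_nonneg _))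
    have h4 : 2 * (|s n| + M n * |c n| + 1) ≤ M n * (2 * (|s n| + M n * |c n| + 1)) :=
      le_mul_of_one_le_left (by linarith) h2
    linarith
  have hMmono : ∀ n m, n ≤ m → M n ≤ M m := by
    intro n m hnm
    induction m with
    | zero =>
      have : n = 0 := by omega
      simp [this]
    | succ m ih =>
      rcases Nat.lt_or_ge n (m+1) with h' | h'
      · have := ih (by omega)
        have h1 : M m ≤ M (m+1) := by
          rw [hMsucc]
          have hMpos : (0:ℤ) < M m := by linarith [hM1 m]
          have hA : (0:ℤ) ≤ |s m| + M m * |c m| :=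
            add_nonneg (abs_nonneg _) (mul_nonneg hMpos.le (abs_nonneg _))
          nlinarith
        linarith
      · have : n = m + 1 := by omega
        rw [this]
  have hMdvd : ∀ n m, n ≤ m → M n ∣ M m := by
    intro n m hnm
    induction m with
    | zero => have : n = 0 := by omega
              rw [this]
    | succ m ih =>
      rcases Nat.lt_or_ge n (m+1) with h' | h'
      · exact dvd_trans (ih (by omega)) ⟨_, hMsucc m⟩
      · have : n = m + 1 := by omega
        rw [this]
  have hMgrow : ∀ n : ℕ, (2:ℤ) ^ n ≤ M n := by
    intro n
    induction n with
    | zero => simp [hM0]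
    | succ n ih =>
      rw [hMsucc, pow_succ]
      have hMpos : (0:ℤ) < M n := by linarith [hM1 n]
      have hA : (0:ℤ) ≤ |s n| + M n * |c n| :=
        add_nonneg (abs_nonneg _) (mul_nonneg hMpos.le (abs_nonneg _))
      have h2 : (2:ℤ) ≤ 2 * (|s n| + M n * |c n| + 1) := by linarith
      have hp : (0:ℤ) < 2 ^ n := by positivity
      calc (2:ℤ)^n * 2 ≤ M n * 2 := by nlinarith
        _ ≤ M n * (2 * (|s n| + M n * |c n| + 1)) := by nlinarith
  -- the partial sums are exactly s N
  have hssum : ∀ N, s N = ∑ k ∈ Finset.range N, M k * c k := by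
    intro N
    induction N with
    | zero => simp [hs0]
    | succ N ih => rw [hssucc, Finset.sum_range_succ, ih]
  -- key divisibility
  set m := φ (fun n => M n) with hm
  have hkey : ∀ N, M N ∣ (m - s N) := by
    intro N
    have := tail_dvd φ (fun n => M n) (M N) N (fun n hn => hMdvd N n hn)
    rw [hssum]
    simpa [hc] using this
  -- for large N, m = s N
  have hlarge : ∀ N, 1 ≤ N → 2 * |m| < M N → m = s N := by
    intro N hN1 hNm
    have hd := hkey N
    by_contra hne
    have h1 : M N ≤ |m - s N| := Int.le_of_dvd (abs_pos.mpr (sub_ne_zero.mpr hne)) ((dvd_abs _ _).mpr hd)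
    have h2 : |m - s N| ≤ |m| + |s N| := abs_sub _ _
    have h3 : 2 * |s N| < M N := by
      obtain ⟨N', rfl⟩ := Nat.exists_eq_succ_of_ne_zero (show N ≠ 0 by omega)
      exact hsb N'
    linarith
  -- choose a large N
  obtain ⟨N, hN⟩ : ∃ N : ℕ, 1 ≤ N ∧ 2 * |m| < 2 ^ N := by
    refine ⟨(2 * |m|).toNat + 1, by omega, ?_⟩
    have h1 : ((2 * |m|).toNat : ℤ) < 2 ^ ((2 * |m|).toNat) := by
      exact_mod_cast (Nat.lt_two_pow_self : (2 * |m|).toNat < 2 ^ (2 * |m|).toNat)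
    have h2 : 2 * |m| ≤ ((2 * |m|).toNat : ℤ) := by
      rcases le_or_gt 0 (2 * |m|) with h | h
      · rw [Int.toNat_of_nonneg h]
      · exact le_trans h.le (Int.natCast_nonneg _)
    have h3 : (2:ℤ) ^ ((2 * |m|).toNat) ≤ 2 ^ ((2 * |m|).toNat + 1) := by
      apply pow_le_pow_right₀ <;> norm_num
    linarith
  have e1 : m = s N := hlarge N hN.1 (lt_of_lt_of_le hN.2 (hMgrow N))
  have e2 : m = s (N + 1) := by
    apply hlarge (N+1) (by omega)
    have : (2:ℤ)^N ≤ 2^(N+1) := by apply pow_le_pow_right₀ <;> norm_num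
    exact lt_of_lt_of_le (lt_of_lt_of_le hN.2 this) (hMgrow (N+1))
  have : M N * c N = 0 := by
    have := hssucc N
    omega
  have : c N = 0 := by
    have h1 := hM1 N
    rcases mul_eq_zero.mp this with h | h
    · omega
    · exact h
  exact h N this

/-- The support of `n ↦ φ (Pi.single n 1)` is finite. -/
lemma support_finite (φ : (ℕ → ℤ) →+ ℤ) :
    (Function.support fun n => φ (Pi.single n 1)).Finite := by
  classical
  by_contra hS
  replace hS : (Function.support fun n => φ (Pi.single n 1)).Infinite := hS
  set f : ℕ → ℕ := fun k => ((hS.natEmbedding _) k : ℕ) with hf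
  have hfinj : Function.Injective f := fun a b hab => by
    have := (hS.natEmbedding _).injective (Subtype.ext hab)
    exact this
  have hfS : ∀ k, φ (Pi.single (f k) 1) ≠ 0 := fun k => ((hS.natEmbedding _) k).2
  -- build the composed hom
  set E : (ℕ → ℤ) →+ (ℕ → ℤ) :=
    { toFun := fun y m => if h : ∃ k, f k = m then y h.choose else 0
      map_zero' := by
        funext m
        show (if h : ∃ k, f k = m then (0 : ℕ → ℤ) h.choose else 0) = 0
        split <;> rfl
      map_add' := by
        intro y z
        funext m
        show (if h : ∃ k, f k = m then (y + z) h.choose else 0)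
            = (if h : ∃ k, f k = m then y h.choose else 0)
              + (if h : ∃ k, f k = m then z h.choose else 0)
        split <;> simp } with hE
  have hEsingle : ∀ k, E (Pi.single k 1) = Pi.single (f k) 1 := by
    intro k
    funext m
    show (if h : ∃ j, f j = m then (Pi.single k 1 : ℕ → ℤ) h.choose else 0)
        = (Pi.single (f k) 1 : ℕ → ℤ) m
    by_cases h : ∃ j, f j = m
    · have hcs := h.choose_spec
      rw [dif_pos h]
      by_cases hm : m = f k
      · have hck : h.choose = k := hfinj (by rw [hcs, hm])
        rw [hck, hm]
        simp [Pi.single_apply]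
      · have hck : h.choose ≠ k := fun hc => hm (by rw [← hcs, hc])
        simp [Pi.single_apply, hck, hm]
    · rw [dif_neg h]
      have hm : m ≠ f k := fun hc => h ⟨k, hc.symm⟩
      simp [Pi.single_apply, hm]
  have := not_forall_single_ne (φ.comp E)
  apply this
  intro k
  simpa [hEsingle k] using hfS k

/-- Specker: `Hom(ℤ^ℕ, ℤ) ≃+ ⊕ℤ`. -/
noncomputable def speckerEquiv : ((ℕ → ℤ) →+ ℤ) ≃+ (ℕ →₀ ℤ) := by
  classical
  -- invFun as an explicit hom
  refine
    { toFun := fun φ => Finsupp.ofSupportFinite (fun n => φ (Pi.single n 1)) (support_finite φ)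
      invFun := fun x => x.sum fun n cc => cc • Pi.evalAddMonoidHom (fun _ : ℕ => ℤ) n
      left_inv := ?_
      right_inv := ?_
      map_add' := ?_ }
  · intro φ
    set x := Finsupp.ofSupportFinite (fun n => φ (Pi.single n 1)) (support_finite φ) with hx
    have hxv : ∀ n, x n = φ (Pi.single n 1) := fun n => by
      rw [hx]; rfl
    have key : ∀ n, (x.sum fun k cc => cc • Pi.evalAddMonoidHom (fun _ : ℕ => ℤ) k)
        (Pi.single n 1) = x n := by
      intro n
      rw [Finsupp.sum, AddMonoidHom.finset_sum_apply]
      simp only [AddMonoidHom.smul_apply, Pi.evalAddMonoidHom_apply, Pi.single_apply,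
        smul_eq_mul]
      rw [Finset.sum_congr rfl (fun k _ => by rw [mul_ite, mul_one, mul_zero])]
      rw [Finset.sum_ite_eq' x.support n (fun k => x k)]
      split
      · rfl
      · exact (Finsupp.notMem_support_iff.mp (by assumption)).symm
    have : φ - (x.sum fun k cc => cc • Pi.evalAddMonoidHom (fun _ : ℕ => ℤ) k) = 0 := by
      apply vanish_of_single
      intro n
      simp [AddMonoidHom.sub_apply, key n, hxv n]
    have := sub_eq_zero.mp this
    exact this.symm
  · intro x
    ext n
    show (x.sum fun k cc => cc • Pi.evalAddMonoidHom (fun _ : ℕ => ℤ) k) (Pi.single n 1) = x n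
    rw [Finsupp.sum, AddMonoidHom.finset_sum_apply]
    simp only [AddMonoidHom.smul_apply, Pi.evalAddMonoidHom_apply, Pi.single_apply,
      smul_eq_mul]
    rw [Finset.sum_congr rfl (fun k _ => by rw [mul_ite, mul_one, mul_zero])]
    rw [Finset.sum_ite_eq' x.support n (fun k => x k)]
    split
    · rfl
    · exact (Finsupp.notMem_support_iff.mp (by assumption)).symm
  · intro φ ψ
    ext n
    rfl

/-- `Hom(⊕ℤ, ℤ) ≃+ ℤ^ℕ`. -/
noncomputable def finsuppDualEquiv : ((ℕ →₀ ℤ) →+ ℤ) ≃+ (ℕ → ℤ) where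
  toFun φ n := φ (Finsupp.single n 1)
  invFun f := Finsupp.liftAddHom fun n => AddMonoidHom.mulRight (f n)
  left_inv φ := by
    apply Finsupp.addHom_ext
    intro n cc
    rw [Finsupp.liftAddHom_apply_single]
    show cc * φ (Finsupp.single n 1) = _
    rw [← smul_eq_mul, ← map_zsmul, Finsupp.smul_single', mul_one]
  right_inv f := by
    funext n
    show Finsupp.liftAddHom (fun n => AddMonoidHom.mulRight (f n)) (Finsupp.single n 1) = f n
    rw [Finsupp.liftAddHom_apply_single]
    exact one_mul _
  map_add' φ ψ := by funext n; rfl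

/-- Congruence for `Hom(-, ℤ)`. -/
def homCongr {G H : Type} [AddCommGroup G] [AddCommGroup H] (e : G ≃+ H) :
    (G →+ ℤ) ≃+ (H →+ ℤ) where
  toFun φ := φ.comp e.symm.toAddMonoidHom
  invFun ψ := ψ.comp e.toAddMonoidHom
  left_inv φ := by ext g; simp
  right_inv ψ := by ext h; simp
  map_add' φ ψ := by ext h; simp

/-- Hom(Hom(⊕_ω ℤ, ℤ), ℤ) ≅ ⊕_ω ℤ. -/
theorem double_dual_of_countable_free_abelian :
    Nonempty (((((ℕ →₀ ℤ) →+ ℤ)) →+ ℤ) ≃+ (ℕ →₀ ℤ)) := by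
  exact ⟨(homCongr finsuppDualEquiv).trans speckerEquiv⟩
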